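/- Let (X, ν) be a measure space such that L²(X, ν) is infinite-dimensional and separable, H a separable complex Hilbert space, and φ : X → H a total family with all coefficient maps x ↦ ⟨φ_x, f⟩ ν-measurable, satisfying the lower frame condition: there is m > 0 with m‖f‖² ≤ ∫_X |⟨φ_x, f⟩|² dν(x) for all f ∈ H. Then there exist a family ψ : X → H and a constant c < ∞ such that for every g ∈ H the function x ↦ ⟨ψ_x, g⟩ is ν-measurable with ∫_X |⟨ψ_x, g⟩|² dν(x) ≤ c‖g‖², and such that for every f ∈ Dom(C_φ) = {f ∈ H : x ↦ ⟨φ_x, f⟩ ∈ L²(X, ν)} and every g ∈ H, the function x ↦ ⟨g, ψ_x⟩⟨φ_x, f⟩ is ν-integrable and ∫_X ⟨g, ψ_x⟩⟨φ_x, f⟩ dν(x) = ⟨g, f⟩. -/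

import Mathlib

open MeasureTheory Filter Topology
open scoped ComplexInnerProductSpace ENNReal

section Aux

variable {X : Type*} [MeasurableSpace X] {ν : MeasureTheory.Measure X}
  {H : Type*} [NormedAddCommGroup H] [InnerProductSpace ℂ H] [CompleteSpace H]

lemma lintegral_sq_eq_eLpNorm_sq (u : X → ℂ) :
    ∫⁻ x, (‖u x‖₊ : ℝ≥0∞) ^ 2 ∂ν = eLpNorm u 2 ν ^ 2 := by
  rw [eLpNorm_eq_lintegral_rpow_enorm_toReal two_ne_zero ENNReal.ofNat_ne_top]
  rw [← ENNReal.rpow_natCast _ 2, ← ENNReal.rpow_mul]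
  have h2 : ((2 : ℝ≥0∞)).toReal = (2 : ℝ) := by simp
  rw [h2]
  norm_num [enorm_eq_nnnorm]

variable (ν) in
/-- The domain of the analysis operator. -/
def Dom (φ : X → H) : Submodule ℂ H where
  carrier := {f | MemLp (fun x => ⟪φ x, f⟫) 2 ν}
  zero_mem' := by
    have : (fun x => ⟪φ x, (0 : H)⟫) = (fun _ => (0 : ℂ)) :=
      funext fun x => inner_zero_right _
    simpa [Set.mem_setOf_eq, this] using zero_memLp (p := 2) (μ := ν) (E := ℂ)
  add_mem' := by
    intro a b ha hb
    have : (fun x => ⟪φ x, a + b⟫) = fun x => ⟪φ x, a⟫ + ⟪φ x, b⟫ :=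
      funext fun x => inner_add_right _ _ _
    show MemLp (fun x => ⟪φ x, a + b⟫) 2 ν
    rw [this]; exact ha.add hb
  smul_mem' := by
    intro c a ha
    have : (fun x => ⟪φ x, c • a⟫) = fun x => c * ⟪φ x, a⟫ :=
      funext fun x => inner_smul_right _ _ _
    simpa [Set.mem_setOf_eq, this] using ha.const_mul c

variable (ν) in
/-- The analysis operator as a linear map on its domain. -/
noncomputable def Cmap (φ : X → H) : Dom ν φ →ₗ[ℂ] Lp ℂ 2 ν where
  toFun fd := MemLp.toLp _ fd.2
  map_add' fd gd := by
    rw [← MemLp.toLp_add fd.2 gd.2]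
    exact (MemLp.toLp_eq_toLp_iff (fd + gd).2 ((fd : Dom ν φ).2.add gd.2)).mpr
      (Eventually.of_forall fun x => inner_add_right _ _ _)
  map_smul' c fd := by
    rw [RingHom.id_apply, ← MemLp.toLp_const_smul c fd.2]
    exact (MemLp.toLp_eq_toLp_iff (c • fd).2 (fd.2.const_smul c)).mpr
      (Eventually.of_forall fun x => inner_smul_right _ _ _)

omit [CompleteSpace H] in
lemma Cmap_coeFn {φ : X → H} (fd : Dom ν φ) :
    ⇑(Cmap ν φ fd) =ᵐ[ν] fun x => ⟪φ x, (fd : H)⟫ :=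
  MemLp.coeFn_toLp fd.2

end Aux

set_option maxHeartbeats 1000000 in
/-- If `L²(X, ν)` is infinite-dimensional and separable, `H` is separable,
and `φ : X → H` is a total family satisfying the lower frame condition, then there exists a
Bessel family `ψ : X → H` which is dual to `φ` on `Dom(C_φ)`. -/
theorem lower_semiframe_has_upper_dual
    {X : Type*} [MeasurableSpace X] (ν : Measure X)
    {H : Type*} [NormedAddCommGroup H] [InnerProductSpace ℂ H] [CompleteSpace H]
    [TopologicalSpace.SeparableSpace H]
    [TopologicalSpace.SeparableSpace (Lp ℂ 2 ν)]
    (hinfdim : ¬ FiniteDimensional ℂ (Lp ℂ 2 ν))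
    (φ : X → H)
    (hφmeas : ∀ f : H, AEMeasurable (fun x => ⟪φ x, f⟫) ν)
    (hφtotal : (Submodule.span ℂ (Set.range φ)).topologicalClosure = ⊤)
    (m : ℝ) (hm : 0 < m)
    (hlower : ∀ f : H,
      ENNReal.ofReal (m * ‖f‖ ^ 2) ≤ ∫⁻ x, (‖⟪φ x, f⟫‖₊ : ℝ≥0∞) ^ 2 ∂ν) :
    ∃ (ψ : X → H) (c : ℝ),
      (∀ g : H, AEMeasurable (fun x => ⟪ψ x, g⟫) ν ∧
        ∫⁻ x, (‖⟪ψ x, g⟫‖₊ : ℝ≥0∞) ^ 2 ∂ν ≤ ENNReal.ofReal (c * ‖g‖ ^ 2)) ∧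
      ∀ f : H, MemLp (fun x => ⟪φ x, f⟫) 2 ν →
        ∀ g : H, Integrable (fun x => ⟪g, ψ x⟫ * ⟪φ x, f⟫) ν ∧
          ∫ x, ⟪g, ψ x⟫ * ⟪φ x, f⟫ ∂ν = ⟪g, f⟫ := by
  have hs : (0 : ℝ) < Real.sqrt m := Real.sqrt_pos.mpr hm
  -- lower bound for the analysis operator
  have hCnorm : ∀ fd : Dom ν φ, Real.sqrt m * ‖(fd : H)‖ ≤ ‖Cmap ν φ fd‖ := by
    intro fd
    have h1 := hlower (fd : H)
    rw [lintegral_sq_eq_eLpNorm_sq] at h1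
    have hns : ‖Cmap ν φ fd‖ = (eLpNorm (fun x => ⟪φ x, (fd : H)⟫) 2 ν).toReal :=
      Lp.norm_toLp _ fd.2
    have h2 : eLpNorm (fun x => ⟪φ x, (fd : H)⟫) 2 ν
        = ENNReal.ofReal ‖Cmap ν φ fd‖ := by
      rw [hns, ENNReal.ofReal_toReal fd.2.2.ne]
    rw [h2, ← ENNReal.ofReal_pow (norm_nonneg _)] at h1
    have h3 : m * ‖(fd : H)‖ ^ 2 ≤ ‖Cmap ν φ fd‖ ^ 2 :=
      (ENNReal.ofReal_le_ofReal_iff (by positivity)).mp h1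
    calc Real.sqrt m * ‖(fd : H)‖
        = Real.sqrt (m * ‖(fd : H)‖ ^ 2) := by
          rw [Real.sqrt_mul hm.le, Real.sqrt_sq (norm_nonneg _)]
      _ ≤ Real.sqrt (‖Cmap ν φ fd‖ ^ 2) := Real.sqrt_le_sqrt h3
      _ = ‖Cmap ν φ fd‖ := Real.sqrt_sq (norm_nonneg _)
  -- injectivity
  have hinj : Function.Injective (Cmap ν φ) := by
    intro a b hab
    have h0 : Cmap ν φ (a - b) = 0 := by rw [map_sub, hab, sub_self]
    have h1 : Real.sqrt m * ‖((a - b : Dom ν φ) : H)‖ ≤ 0 := by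
      simpa [h0] using hCnorm (a - b)
    have h2 : ‖((a - b : Dom ν φ) : H)‖ = 0 := by
      nlinarith [norm_nonneg ((a - b : Dom ν φ) : H)]
    have h3 : ((a - b : Dom ν φ) : H) = 0 := norm_eq_zero.mp h2
    have h4 : (a - b : Dom ν φ) = 0 := Subtype.ext h3
    exact sub_eq_zero.mp h4
  -- the analysis operator is closed
  have hclosed_key : ∀ (fseq : ℕ → Dom ν φ) (flim : H) (y : Lp ℂ 2 ν),
      Tendsto (fun n => ((fseq n : H))) atTop (𝓝 flim) →
      Tendsto (fun n => Cmap ν φ (fseq n)) atTop (𝓝 y) →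
      ∃ h : MemLp (fun x => ⟪φ x, flim⟫) 2 ν, h.toLp _ = y := by
    intro fseq flim y hfH hfL
    have h1 : Tendsto (fun n => eLpNorm (⇑(Cmap ν φ (fseq n)) - ⇑y) 2 ν) atTop (𝓝 0) :=
      (Lp.tendsto_Lp_iff_tendsto_eLpNorm' _ _).mp hfL
    have h2 : TendstoInMeasure ν (fun n => ⇑(Cmap ν φ (fseq n))) atTop ⇑y :=
      tendstoInMeasure_of_tendsto_eLpNorm (p := 2) two_ne_zero
        (fun n => Lp.aestronglyMeasurable _) (Lp.aestronglyMeasurable _) h1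
    obtain ⟨ns, hns_mono, hns⟩ := h2.exists_seq_tendsto_ae
    have hcoe : ∀ᵐ x ∂ν, ∀ n, ⇑(Cmap ν φ (fseq n)) x = ⟪φ x, (fseq n : H)⟫ :=
      ae_all_iff.mpr fun n => Cmap_coeFn (fseq n)
    have key : (fun x => ⟪φ x, flim⟫) =ᵐ[ν] ⇑y := by
      filter_upwards [hns, hcoe] with x hx1 hx2
      have ha : Tendsto (fun k => ⟪φ x, (fseq (ns k) : H)⟫) atTop (𝓝 (y x)) := by
        simpa [hx2] using hx1
      have hb : Tendsto (fun k => ⟪φ x, (fseq (ns k) : H)⟫) atTop (𝓝 ⟪φ x, flim⟫) :=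
        tendsto_const_nhds.inner (hfH.comp hns_mono.tendsto_atTop)
      exact tendsto_nhds_unique hb ha
    refine ⟨(Lp.memLp y).ae_eq key.symm, ?_⟩
    exact ((MemLp.toLp_eq_toLp_iff ((Lp.memLp y).ae_eq key.symm) (Lp.memLp y)).mpr
      key).trans (Lp.toLp_coeFn y (Lp.memLp y))
  -- the range of the analysis operator is closed
  have hRclosed : IsClosed ((LinearMap.range (Cmap ν φ) : Submodule ℂ (Lp ℂ 2 ν))
      : Set (Lp ℂ 2 ν)) := by
    refine IsSeqClosed.isClosed ?_
    intro u y hu_mem hu_t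
    choose fseq hfseq using hu_mem
    have huC : CauchySeq u := hu_t.cauchySeq
    have hfC : CauchySeq (fun n => ((fseq n : H))) := by
      rw [Metric.cauchySeq_iff] at huC ⊢
      intro ε hε
      obtain ⟨N, hN⟩ := huC (Real.sqrt m * ε) (by positivity)
      refine ⟨N, fun a ha b hb => ?_⟩
      have hd : dist ((fseq a : H)) ((fseq b : H))
          ≤ (Real.sqrt m)⁻¹ * dist (u a) (u b) := by
        rw [dist_eq_norm, dist_eq_norm]
        have h1 := hCnorm (fseq a - fseq b)
        rw [map_sub, hfseq a, hfseq b] at h1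
        have h1' : Real.sqrt m * ‖(fseq a : H) - (fseq b : H)‖ ≤ ‖u a - u b‖ := by
          simpa using h1
        calc ‖(fseq a : H) - (fseq b : H)‖
            = (Real.sqrt m)⁻¹ * (Real.sqrt m * ‖(fseq a : H) - (fseq b : H)‖) := by
              rw [inv_mul_cancel_left₀ hs.ne']
          _ ≤ (Real.sqrt m)⁻¹ * ‖u a - u b‖ :=
              mul_le_mul_of_nonneg_left h1' (by positivity)
      calc dist ((fseq a : H)) ((fseq b : H)) ≤ (Real.sqrt m)⁻¹ * dist (u a) (u b) := hd
        _ < (Real.sqrt m)⁻¹ * (Real.sqrt m * ε) := by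
            exact mul_lt_mul_of_pos_left (hN a ha b hb) (by positivity)
        _ = ε := by rw [inv_mul_cancel_left₀ hs.ne']
    obtain ⟨flim, hflim⟩ := cauchySeq_tendsto_of_complete hfC
    obtain ⟨hmem, htoLp⟩ := hclosed_key fseq flim y hflim (by
      have : (fun n => Cmap ν φ (fseq n)) = u := funext hfseq
      rw [this]; exact hu_t)
    exact ⟨(⟨flim, hmem⟩ : Dom ν φ), htoLp⟩
  haveI : CompleteSpace (LinearMap.range (Cmap ν φ)) := hRclosed.completeSpace_coe
  -- a bounded left inverse for the analysis operator
  obtain ⟨V, hVnorm, hVC, hVzero⟩ :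
      ∃ V : Lp ℂ 2 ν →L[ℂ] H, ‖V‖ ≤ (Real.sqrt m)⁻¹ ∧
        (∀ fd : Dom ν φ, V (Cmap ν φ fd) = fd) ∧
        (∀ u ∈ (LinearMap.range (Cmap ν φ))ᗮ, V u = 0) := by
    haveI : Fact ((1 : ℝ≥0∞) ≤ 2) := ⟨one_le_two⟩
    set R : Submodule ℂ (Lp ℂ 2 ν) := LinearMap.range (Cmap ν φ) with hR
    let e := LinearEquiv.ofInjective (Cmap ν φ) hinj
    let V₀ : R →ₗ[ℂ] H := (Dom ν φ).subtype ∘ₗ e.symm.toLinearMap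
    have hV₀ : ∀ (fd : Dom ν φ) (y : R), (y : Lp ℂ 2 ν) = Cmap ν φ fd →
        V₀ y = (fd : H) := by
      intro fd y hy
      have hy2 : y = e fd := Subtype.ext (by
        rw [hy]; exact (LinearEquiv.ofInjective_apply _ _).symm)
      rw [hy2]
      show (Dom ν φ).subtype (e.symm (e fd)) = (fd : H)
      rw [e.symm_apply_apply]
      rfl
    let Vlin : Lp ℂ 2 ν →ₗ[ℂ] H := V₀ ∘ₗ (Submodule.orthogonalProjectionOnto R).toLinearMap
    have hVlin : ∀ F, Vlin F = V₀ (Submodule.orthogonalProjectionOnto R F) := fun _ => rfl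
    have hVbound : ∀ F, ‖Vlin F‖ ≤ (Real.sqrt m)⁻¹ * ‖F‖ := by
      intro F
      obtain ⟨fd, hfd⟩ := (Submodule.orthogonalProjectionOnto R F).2
      rw [hVlin, hV₀ fd _ hfd.symm]
      have h1 : Real.sqrt m * ‖(fd : H)‖ ≤ ‖Cmap ν φ fd‖ := hCnorm fd
      have h2 : ‖Cmap ν φ fd‖ = ‖(Submodule.orthogonalProjectionOnto R F : Lp ℂ 2 ν)‖ := by rw [hfd]
      have h3 : ‖(Submodule.orthogonalProjectionOnto R F : Lp ℂ 2 ν)‖ ≤ ‖F‖ := by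
        have := (Submodule.orthogonalProjectionOnto R).le_of_opNorm_le (Submodule.orthogonalProjectionOnto_norm_le R) F
        simpa using this
      calc ‖(fd : H)‖
          = (Real.sqrt m)⁻¹ * (Real.sqrt m * ‖(fd : H)‖) := by
            rw [inv_mul_cancel_left₀ hs.ne']
        _ ≤ (Real.sqrt m)⁻¹ * ‖F‖ := by
            refine mul_le_mul_of_nonneg_left ?_ (by positivity)
            rw [h2] at h1; exact h1.trans h3
    refine ⟨Vlin.mkContinuous _ hVbound,
      Vlin.mkContinuous_norm_le (by positivity) _, ?_, ?_⟩
    · intro fd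
      show Vlin (Cmap ν φ fd) = (fd : H)
      have hmem : Cmap ν φ fd ∈ R := ⟨fd, rfl⟩
      rw [hVlin]
      have hp : Submodule.orthogonalProjectionOnto R (Cmap ν φ fd) = ⟨Cmap ν φ fd, hmem⟩ :=
        Submodule.orthogonalProjectionOnto_mem_subspace_eq_self (⟨Cmap ν φ fd, hmem⟩ : R)
      rw [hp]
      exact hV₀ fd _ rfl
    · intro u hu
      show Vlin u = 0
      rw [hVlin, Submodule.orthogonalProjectionOnto_apply_of_mem_orthogonal hu,
        map_zero]
  set A := ContinuousLinearMap.adjoint V with hAdef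
  -- the adjoint lands in the range of the analysis operator
  have hAmem : ∀ g : H, A g ∈ LinearMap.range (Cmap ν φ) := by
    intro g
    rw [← Submodule.orthogonal_orthogonal (LinearMap.range (Cmap ν φ))]
    intro u hu
    have h1 : ⟪A g, u⟫ = ⟪g, V u⟫ := ContinuousLinearMap.adjoint_inner_left V u g
    rw [← inner_conj_symm, h1, hVzero u hu, inner_zero_right, map_zero]
  have hA : ∀ g : H, ∃ hmem2 : MemLp (fun x => ⟪φ x, V (A g)⟫) 2 ν,
      hmem2.toLp _ = A g := by
    intro g
    obtain ⟨fd, hfd⟩ := hAmem g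
    have h1 : V (A g) = (fd : H) := by rw [← hfd]; exact hVC fd
    rw [h1]
    exact ⟨fd.2, by rw [← hfd]; rfl⟩
  -- the dual family
  have hψ : ∀ (g : H) (x : X), ⟪V (A (φ x)), g⟫ = ⟪φ x, V (A g)⟫ := by
    intro g x
    calc ⟪V (A (φ x)), g⟫ = ⟪A (φ x), A g⟫ :=
          (ContinuousLinearMap.adjoint_inner_right V (A (φ x)) g).symm
      _ = ⟪φ x, V (A g)⟫ := ContinuousLinearMap.adjoint_inner_left V (A g) (φ x)
  have hAnorm : ∀ g : H, ‖A g‖ ≤ (Real.sqrt m)⁻¹ * ‖g‖ := by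
    intro g
    have h1 : ‖A‖ = ‖V‖ := ContinuousLinearMap.adjoint.norm_map V
    calc ‖A g‖ ≤ ‖A‖ * ‖g‖ := A.le_opNorm g
      _ ≤ (Real.sqrt m)⁻¹ * ‖g‖ := by
          rw [h1]; exact mul_le_mul_of_nonneg_right hVnorm (norm_nonneg _)
  refine ⟨fun x => V (A (φ x)), m⁻¹, fun g => ⟨?_, ?_⟩, ?_⟩
  · -- measurability
    have hfun : (fun x => ⟪V (A (φ x)), g⟫) = fun x => ⟪φ x, V (A g)⟫ :=
      funext fun x => hψ g x
    rw [hfun]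
    exact hφmeas _
  · -- Bessel bound
    obtain ⟨hmem2, htoLp⟩ := hA g
    have hfun : ∀ x, ⟪V (A (φ x)), g⟫ = ⟪φ x, V (A g)⟫ := hψ g
    simp only [hfun]
    rw [lintegral_sq_eq_eLpNorm_sq]
    have h2 := Lp.norm_toLp (fun x => ⟪φ x, V (A g)⟫) hmem2
    rw [htoLp] at h2
    have h1 : eLpNorm (fun x => ⟪φ x, V (A g)⟫) 2 ν = ENNReal.ofReal ‖A g‖ := by
      rw [h2, ENNReal.ofReal_toReal hmem2.2.ne]
    rw [h1, ← ENNReal.ofReal_pow (norm_nonneg _)]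
    apply ENNReal.ofReal_le_ofReal
    have h3 := hAnorm g
    have h4 : ((Real.sqrt m)⁻¹ * ‖g‖) ^ 2 = m⁻¹ * ‖g‖ ^ 2 := by
      rw [mul_pow, ← Real.sqrt_inv, Real.sq_sqrt (by positivity)]
    calc ‖A g‖ ^ 2 ≤ ((Real.sqrt m)⁻¹ * ‖g‖) ^ 2 := by
          exact pow_le_pow_left₀ (norm_nonneg _) h3 2
      _ = m⁻¹ * ‖g‖ ^ 2 := h4
  · -- duality
    intro f hf g
    set fd : Dom ν φ := ⟨f, hf⟩ with hfddef
    obtain ⟨hmem2, htoLp⟩ := hA g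
    have haeg : ⇑(A g) =ᵐ[ν] fun x => ⟪φ x, V (A g)⟫ := by
      have h6 := MemLp.coeFn_toLp hmem2
      rw [htoLp] at h6
      exact h6
    have haef : ⇑(Cmap ν φ fd) =ᵐ[ν] fun x => ⟪φ x, f⟫ := Cmap_coeFn fd
    have haeprod : (fun x => ⟪g, V (A (φ x))⟫ * ⟪φ x, f⟫)
        =ᵐ[ν] fun x => ⟪(A g : Lp ℂ 2 ν) x, (Cmap ν φ fd : Lp ℂ 2 ν) x⟫ := by
      filter_upwards [haeg, haef] with x h1 h2
      have h3 : ⟪g, V (A (φ x))⟫ = (starRingEnd ℂ) ⟪φ x, V (A g)⟫ := by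
        rw [← inner_conj_symm, hψ g x]
      rw [h2, h1, h3]
      exact (RCLike.inner_apply' _ _).symm
    constructor
    · exact ((L2.integrable_inner (𝕜 := ℂ) (A g) (Cmap ν φ fd)).congr haeprod.symm)
    · rw [integral_congr_ae haeprod]
      have h5 : ∫ x, ⟪(A g : Lp ℂ 2 ν) x, (Cmap ν φ fd : Lp ℂ 2 ν) x⟫ ∂ν
          = ⟪(A g : Lp ℂ 2 ν), Cmap ν φ fd⟫ := (L2.inner_def _ _).symm
      rw [h5, ContinuousLinearMap.adjoint_inner_left, hVC fd]
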